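/- If P and A are real square matrices of the same size, P is symmetric positive definite, and P·A + Aᵀ·P < -I (i.e., -(PA + AᵀP + I) is positive definite), then every eigenvalue λ of A satisfies Re(λ) < 0 (A is Hurwitz). -/

import Mathlib

open Matrix

lemma re_dot {m : ℕ} (M : Matrix (Fin m) (Fin m) ℝ) (v : Fin m → ℂ) :
    (star v ⬝ᵥ (M.map Complex.ofReal) *ᵥ v).re
      = (fun i => (v i).re) ⬝ᵥ M *ᵥ (fun i => (v i).re)
        + (fun i => (v i).im) ⬝ᵥ M *ᵥ (fun i => (v i).im) := by
  simp only [dotProduct, mulVec, Pi.star_apply, map_apply, Complex.re_sum, Finset.mul_sum,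
    Complex.mul_re, Complex.mul_im, Complex.ofReal_re, Complex.ofReal_im, RCLike.star_def,
    Complex.conj_re, Complex.conj_im, ← Finset.sum_add_distrib]
  refine Finset.sum_congr rfl fun i _ => Finset.sum_congr rfl fun j _ => ?_
  ring

lemma re_pos {m : ℕ} {M : Matrix (Fin m) (Fin m) ℝ} (hM : M.PosDef) {v : Fin m → ℂ}
    (hv : v ≠ 0) : 0 < (star v ⬝ᵥ (M.map Complex.ofReal) *ᵥ v).re := by
  rw [re_dot]
  set x : Fin m → ℝ := fun i => (v i).re with hx
  set y : Fin m → ℝ := fun i => (v i).im with hy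
  have hxy : x ≠ 0 ∨ y ≠ 0 := by
    by_contra h
    push_neg at h
    apply hv
    ext i
    have h1 : x i = 0 := by rw [h.1]; rfl
    have h2 : y i = 0 := by rw [h.2]; rfl
    exact Complex.ext h1 h2
  have semid := hM.posSemidef
  rcases hxy with h | h
  · have := hM.dotProduct_mulVec_pos h
    have h2 := semid.dotProduct_mulVec_nonneg y
    simp only [star_trivial] at this h2
    linarith
  · have := hM.dotProduct_mulVec_pos h
    have h2 := semid.dotProduct_mulVec_nonneg x
    simp only [star_trivial] at this h2
    linarith

theorem lyapunov_hurwitz (m : ℕ)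
    (P A : Matrix (Fin m) (Fin m) ℝ)
    (hP : P.PosDef)
    (hLyap : (-(P * A + Aᵀ * P + 1)).PosDef) :
    ∀ (μ : ℂ) (v : Fin m → ℂ), v ≠ 0 →
      (A.map Complex.ofReal).mulVec v = μ • v → μ.re < 0 := by
  intro μ v hv hev
  set Pc := P.map Complex.ofReal with hPc
  set Ac := A.map Complex.ofReal with hAc
  set q := star v ⬝ᵥ Pc *ᵥ v with hq
  -- map distributes
  have hmap : (-(P * A + Aᵀ * P + 1)).map Complex.ofReal = -(Pc * Ac + Acᵀ * Pc + 1) := by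
    ext i j
    simp [hPc, hAc, map_apply, Matrix.mul_apply, Matrix.one_apply, transpose_apply, apply_ite]
  -- first term
  have h1 : star v ⬝ᵥ (Pc * Ac) *ᵥ v = μ * q := by
    rw [← mulVec_mulVec, hev, mulVec_smul, dotProduct_smul, smul_eq_mul]
  -- second term
  have hAH : Acᴴ = Acᵀ := by
    ext i j
    simp [hAc, conjTranspose_apply, Complex.conj_ofReal]
  have h2 : star v ⬝ᵥ (Acᵀ * Pc) *ᵥ v = (starRingEnd ℂ) μ * q := by
    rw [← mulVec_mulVec, dotProduct_mulVec, vecMul_transpose]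
    have : Ac *ᵥ star v = (starRingEnd ℂ) μ • star v := by
      have h := congrArg star hev
      rw [star_mulVec, hAH, vecMul_transpose] at h
      rw [h, star_smul]
      simp
    rw [this, smul_dotProduct, smul_eq_mul, hq, dotProduct_mulVec]
  -- positivity from Lyapunov
  have hpos := re_pos hLyap hv
  rw [hmap] at hpos
  have hneg : (star v ⬝ᵥ (Pc * Ac + Acᵀ * Pc + 1) *ᵥ v).re < 0 := by
    rw [neg_mulVec, dotProduct_neg] at hpos
    simpa using hpos
  rw [add_mulVec, add_mulVec, dotProduct_add, dotProduct_add, h1, h2, one_mulVec] at hneg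
  have hcomb : μ * q + (starRingEnd ℂ) μ * q = ((2 * μ.re : ℝ) : ℂ) * q := by
    rw [← add_mul, Complex.add_conj]
    try push_cast
    try ring
  rw [hcomb] at hneg
  have hqpos : 0 < q.re := re_pos hP hv
  have hs : 0 ≤ (star v ⬝ᵥ v).re := by
    simp only [dotProduct, Complex.re_sum]
    apply Finset.sum_nonneg
    intro i _
    simp only [Pi.star_apply, RCLike.star_def, Complex.mul_re, Complex.conj_re, Complex.conj_im]
    nlinarith [sq_nonneg (v i).re, sq_nonneg (v i).im]
  have hre : (((2 * μ.re : ℝ) : ℂ) * q + star v ⬝ᵥ v).re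
      = 2 * μ.re * q.re + (star v ⬝ᵥ v).re := by
    simp [Complex.add_re, Complex.mul_re]
  rw [hre] at hneg
  nlinarith
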